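/- Let Γ be a reflexive locally-finite relation on V and v, w ∈ V. If w ∈ K_v and v ∉ Γ(K_w), then K_w ⊆ K_v. -/

import Mathlib

open Set Pointwise

variable {V : Type*}

/-- Image of a set under the relation. -/
def img (Γ : V → Set V) (F : Set V) : Set V := ⋃ x ∈ F, Γ x
/-- Reverse relation. -/
def rev (Γ : V → Set V) : V → Set V := fun y => {x | y ∈ Γ x}
/-- Boundary ∂(F) = Γ(F) \ F. -/
def bd (Γ : V → Set V) (F : Set V) : Set V := img Γ F \ F
/-- ∇(F) = V \ (F ∪ Γ(F)). -/
def nab (Γ : V → Set V) (F : Set V) : Set V := (F ∪ img Γ F)ᶜ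
/-- Reflexive relation. -/
def Refl (Γ : V → Set V) : Prop := ∀ x, x ∈ Γ x
/-- Locally finite relation. -/
def LocFin (Γ : V → Set V) : Prop := ∀ x, (Γ x).Finite
/-- Automorphism of the relation. -/
def IsAuto (Γ : V → Set V) (φ : V ≃ V) : Prop := ∀ x, Γ (φ x) = φ '' Γ x
/-- Vertex-transitivity. -/
def VT (Γ : V → Set V) : Prop := ∀ x y : V, ∃ φ : V ≃ V, IsAuto Γ φ ∧ φ x = y
/-- A finite v-Moser set. -/
def MoserSet (Γ : V → Set V) (v : V) (F : Set V) : Prop :=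
  F.Finite ∧ v ∈ F ∧ rev Γ v ∩ F = {v}
/-- μ(v): minimum boundary size over v-Moser sets. -/
noncomputable def mu (Γ : V → Set V) (v : V) : ℕ :=
  sInf {n | ∃ F, MoserSet Γ v F ∧ (bd Γ F).ncard = n}
/-- A v-molecule: Moser set of minimum boundary. -/
def Molecule (Γ : V → Set V) (v : V) (F : Set V) : Prop :=
  MoserSet Γ v F ∧ (bd Γ F).ncard = mu Γ v
/-- The v-kernel: the unique minimal v-molecule. -/
def IsKernel (Γ : V → Set V) (v : V) (K : Set V) : Prop :=
  Molecule Γ v K ∧ ∀ F, Molecule Γ v F → K ⊆ F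
/-- Weak connectivity κ₀. -/
noncomputable def kappa0 (Γ : V → Set V) : ℕ :=
  sInf {n | ∃ X : Set V, X.Finite ∧ X.Nonempty ∧ (bd Γ X).ncard = n}
/-- Weak fragment. -/
def WeakFragment (Γ : V → Set V) (X : Set V) : Prop :=
  X.Finite ∧ X.Nonempty ∧ (bd Γ X).ncard = kappa0 Γ
/-- Weak atom: a weak fragment of minimum cardinality. -/
def WeakAtom (Γ : V → Set V) (X : Set V) : Prop :=
  WeakFragment Γ X ∧ ∀ Y, WeakFragment Γ Y → X.ncard ≤ Y.ncard

lemma img_finite {Γ : V → Set V} (hlf : LocFin Γ) {A : Set V} (hA : A.Finite) :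
    (img Γ A).Finite := hA.biUnion (fun x _ => hlf x)

lemma bd_finite {Γ : V → Set V} (hlf : LocFin Γ) {A : Set V} (hA : A.Finite) :
    (bd Γ A).Finite := (img_finite hlf hA).diff

lemma img_union (Γ : V → Set V) (A B : Set V) :
    img Γ (A ∪ B) = img Γ A ∪ img Γ B := by
  exact Set.biUnion_union A B Γ

lemma img_mono (Γ : V → Set V) {A B : Set V} (h : A ⊆ B) : img Γ A ⊆ img Γ B :=
  Set.biUnion_subset_biUnion_left h

lemma bd_submod {Γ : V → Set V} (hlf : LocFin Γ) {A B : Set V}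
    (hA : A.Finite) (hB : B.Finite) :
    (bd Γ (A ∪ B)).ncard + (bd Γ (A ∩ B)).ncard
      ≤ (bd Γ A).ncard + (bd Γ B).ncard := by
  set U := bd Γ (A ∪ B)
  set I := bd Γ (A ∩ B)
  have hUfin : U.Finite := bd_finite hlf (hA.union hB)
  have hIfin : I.Finite := bd_finite hlf (hA.inter_of_left _)
  have hafin : (bd Γ A).Finite := bd_finite hlf hA
  have hbfin : (bd Γ B).Finite := bd_finite hlf hB
  have hsub1 : U ∪ I ⊆ bd Γ A ∪ bd Γ B := by
    rintro x (⟨hx1, hx2⟩ | ⟨hx1, hx2⟩)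
    · rw [img_union] at hx1
      rcases hx1 with h | h
      · exact Or.inl ⟨h, fun hxa => hx2 (Or.inl hxa)⟩
      · exact Or.inr ⟨h, fun hxb => hx2 (Or.inr hxb)⟩
    · by_cases hxa : x ∈ A
      · exact Or.inr ⟨img_mono Γ Set.inter_subset_right hx1,
          fun hxb => hx2 ⟨hxa, hxb⟩⟩
      · exact Or.inl ⟨img_mono Γ Set.inter_subset_left hx1, hxa⟩
  have hsub2 : U ∩ I ⊆ bd Γ A ∩ bd Γ B := by
    rintro x ⟨⟨_, hx2⟩, ⟨hxI, _⟩⟩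
    have hxa : x ∉ A := fun h => hx2 (Or.inl h)
    have hxb : x ∉ B := fun h => hx2 (Or.inr h)
    exact ⟨⟨img_mono Γ Set.inter_subset_left hxI, hxa⟩,
      ⟨img_mono Γ Set.inter_subset_right hxI, hxb⟩⟩
  calc U.ncard + I.ncard = (U ∪ I).ncard + (U ∩ I).ncard :=
        (Set.ncard_union_add_ncard_inter U I hUfin hIfin).symm
    _ ≤ (bd Γ A ∪ bd Γ B).ncard + (bd Γ A ∩ bd Γ B).ncard :=
        Nat.add_le_add (Set.ncard_le_ncard hsub1 (hafin.union hbfin))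
          (Set.ncard_le_ncard hsub2 (hafin.inter_of_left _))
    _ = (bd Γ A).ncard + (bd Γ B).ncard :=
        Set.ncard_union_add_ncard_inter _ _ hafin hbfin

lemma mu_le {Γ : V → Set V} {v : V} {F : Set V} (hF : MoserSet Γ v F) :
    mu Γ v ≤ (bd Γ F).ncard := Nat.sInf_le ⟨F, hF, rfl⟩

/-- If w ∈ K_v and v ∉ Γ(K_w) then K_w ⊆ K_v. -/
theorem stmt7 {V : Type*} (Γ : V → Set V) (hr : Refl Γ) (hlf : LocFin Γ)
    (v w : V) (Kv Kw : Set V) (hKv : IsKernel Γ v Kv) (hKw : IsKernel Γ w Kw)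
    (hw : w ∈ Kv) (hv : v ∉ img Γ Kw) : Kw ⊆ Kv := by
  obtain ⟨⟨⟨hKvfin, hvKv, hrevv⟩, hbdKv⟩, _⟩ := hKv
  obtain ⟨⟨⟨hKwfin, hwKw, hrevw⟩, hbdKw⟩, hKwmin⟩ := hKw
  -- Kv ∪ Kw is a v-Moser set
  have hU : MoserSet Γ v (Kv ∪ Kw) := by
    refine ⟨hKvfin.union hKwfin, Or.inl hvKv, ?_⟩
    ext x
    constructor
    · rintro ⟨hx1, hx2 | hx2⟩
      · have : x ∈ rev Γ v ∩ Kv := ⟨hx1, hx2⟩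
        rwa [hrevv] at this
      · exact absurd (Set.mem_biUnion hx2 hx1) hv
    · rintro rfl
      exact ⟨hr _, Or.inl hvKv⟩
  -- Kv ∩ Kw is a w-Moser set
  have hI : MoserSet Γ w (Kv ∩ Kw) := by
    refine ⟨hKvfin.inter_of_left _, ⟨hw, hwKw⟩, ?_⟩
    ext x
    constructor
    · rintro ⟨hx1, _, hx2⟩
      have : x ∈ rev Γ w ∩ Kw := ⟨hx1, hx2⟩
      rwa [hrevw] at this
    · rintro rfl
      exact ⟨hr _, hw, hwKw⟩
  have h1 : mu Γ v ≤ (bd Γ (Kv ∪ Kw)).ncard := mu_le hU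
  have h2 : mu Γ w ≤ (bd Γ (Kv ∩ Kw)).ncard := mu_le hI
  have h3 := bd_submod hlf hKvfin hKwfin
  rw [hbdKv, hbdKw] at h3
  have hImol : Molecule Γ w (Kv ∩ Kw) := ⟨hI, by omega⟩
  exact fun x hx => ((hKwmin _ hImol) hx).1
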